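/- Let K have characteristic zero and let A = K[x,y]/I where I = (x^k y^m : m > a or k + nm > b) for integers n ≥ 0, a ≥ 1, b > na. Then A is a finite-dimensional local K-algebra of dimension (a+1)(b+1) − na(a+1)/2, with maximal ideal generated by the images of x and y. -/

import Mathlib

open MvPolynomial

private lemma fin2_split (d : Fin 2 →₀ ℕ) :
    Finsupp.single (0 : Fin 2) (d 0) + Finsupp.single (1 : Fin 2) (d 1) = d := by
  ext i
  fin_cases i <;> simp [Finsupp.single_apply]

private lemma single_apply0 (k m : ℕ) :
    (Finsupp.single (0 : Fin 2) k + Finsupp.single (1 : Fin 2) m) 0 = k := by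
  simp [Finsupp.single_apply]

private lemma single_apply1 (k m : ℕ) :
    (Finsupp.single (0 : Fin 2) k + Finsupp.single (1 : Fin 2) m) 1 = m := by
  simp [Finsupp.single_apply]

private lemma count_sum (n a b : ℕ) (hb : n * a ≤ b) :
    ∑ m ∈ Finset.range (a + 1), (b + 1 - n * m) = (a + 1) * (b + 1) - n * a * (a + 1) / 2 := by
  have hle : ∀ m ∈ Finset.range (a + 1), n * m ≤ b + 1 := by
    intro m hm
    simp only [Finset.mem_range] at hm
    have : n * m ≤ n * a := Nat.mul_le_mul_left n (by omega)
    omega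
  rw [Finset.sum_tsub_distrib _ hle, Finset.sum_const, Finset.card_range, ← Finset.mul_sum]
  obtain ⟨c, hc⟩ := Nat.even_mul_succ_self a
  have hS : (∑ m ∈ Finset.range (a + 1), m) = c := by
    have h2 := Finset.sum_range_id_mul_two (a + 1)
    have h3 : (a + 1) * (a + 1 - 1) = a * (a + 1) := by
      simp [Nat.mul_comm]
    omega
  rw [hS, smul_eq_mul]
  have h4 : n * a * (a + 1) = 2 * (n * c) := by
    rw [mul_assoc, hc]; ring
  omega

theorem stmt_7 (K : Type*) [Field K] [CharZero K] (n a b : ℕ) (ha : 1 ≤ a) (hb : n * a < b)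
    (I : Ideal (MvPolynomial (Fin 2) K))
    (hI : I = Ideal.span {p | ∃ k m : ℕ, (a < m ∨ b < k + n * m) ∧
      p = X 0 ^ k * X 1 ^ m}) :
    Module.Finite K (MvPolynomial (Fin 2) K ⧸ I) ∧
    Module.finrank K (MvPolynomial (Fin 2) K ⧸ I)
      = (a + 1) * (b + 1) - n * a * (a + 1) / 2 ∧
    ∃ h : IsLocalRing (MvPolynomial (Fin 2) K ⧸ I),
      @IsLocalRing.maximalIdeal (MvPolynomial (Fin 2) K ⧸ I) _ h =
        Ideal.span {Ideal.Quotient.mk I (X 0), Ideal.Quotient.mk I (X 1)} := by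
  classical
  -- the "bad" exponent set
  set B : Set (Fin 2 →₀ ℕ) := {d | a < d 1 ∨ b < d 0 + n * d 1} with hB
  -- Step 1 : I is the monomial ideal on B
  have hgen : {p : MvPolynomial (Fin 2) K | ∃ k m : ℕ, (a < m ∨ b < k + n * m) ∧ p = X 0 ^ k * X 1 ^ m}
      = (fun s => monomial s (1 : K)) '' B := by
    ext p
    constructor
    · rintro ⟨k, m, hkm, rfl⟩
      refine ⟨Finsupp.single 0 k + Finsupp.single 1 m, ?_, ?_⟩
      · simp only [hB, Set.mem_setOf_eq, single_apply0, single_apply1]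
        exact hkm
      · rw [X_pow_eq_monomial, X_pow_eq_monomial, monomial_mul, one_mul]
    · rintro ⟨d, hd, rfl⟩
      refine ⟨d 0, d 1, hd, ?_⟩
      rw [X_pow_eq_monomial, X_pow_eq_monomial, monomial_mul, one_mul, fin2_split]
  have hIm : I = Ideal.span ((fun s => monomial s (1 : K)) '' B) := by rw [hI, hgen]
  -- Step 2 : membership criterion
  have hup : ∀ d d' : Fin 2 →₀ ℕ, d' ∈ B → d' ≤ d → d ∈ B := by
    intro d d' hd' hle
    have h0 : d' 0 ≤ d 0 := hle 0
    have h1 : d' 1 ≤ d 1 := hle 1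
    have hn : n * d' 1 ≤ n * d 1 := Nat.mul_le_mul_left n h1
    rcases hd' with h | h
    · exact Or.inl (by omega)
    · exact Or.inr (by omega)
  have hmem : ∀ p : MvPolynomial (Fin 2) K, p ∈ I ↔ ∀ d ∈ p.support, d ∈ B := by
    intro p
    rw [hIm, mem_ideal_span_monomial_image]
    constructor
    · intro h d hd
      obtain ⟨d', hd', hled⟩ := h d hd
      exact hup d d' hd' hled
    · intro h d hd
      exact ⟨d, h d hd, le_refl d⟩
  -- Step 3 : transport to Finsupp world
  set e := (MvPolynomial.basisMonomials (Fin 2) K).repr with he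
  have hrepr : ∀ p : MvPolynomial (Fin 2) K, e p = AddMonoidAlgebra.coeff p := fun p => rfl
  have hreprs : ∀ q : (Fin 2 →₀ ℕ) →₀ K, e.symm q = AddMonoidAlgebra.ofCoeff q := by
    intro q
    apply e.injective
    rw [LinearEquiv.apply_symm_apply, hrepr]
  have hmap : (I.restrictScalars K).map (e : MvPolynomial (Fin 2) K →ₗ[K] ((Fin 2 →₀ ℕ) →₀ K))
      = Finsupp.supported K K B := by
    ext q
    rw [Submodule.mem_map, Finsupp.mem_supported]
    constructor
    · rintro ⟨p, hp, rfl⟩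
      rw [Submodule.restrictScalars_mem] at hp
      intro d hd
      exact (hmem p).1 hp d hd
    · intro hq
      refine ⟨e.symm q, ?_, e.apply_symm_apply q⟩
      rw [Submodule.restrictScalars_mem, hmem, hreprs]
      exact fun d hd => hq hd
  have hcompl : IsCompl (Finsupp.supported K K B) (Finsupp.supported K K Bᶜ) := by
    constructor
    · exact Finsupp.disjoint_supported_supported disjoint_compl_right
    · rw [codisjoint_iff, ← Finsupp.supported_union, Set.union_compl_self,
        Finsupp.supported_univ]
  -- the big linear equivalence
  let E : (MvPolynomial (Fin 2) K ⧸ I) ≃ₗ[K] (↥(Bᶜ) →₀ K) :=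
    (Submodule.Quotient.restrictScalarsEquiv K I).symm ≪≫ₗ
    (Submodule.Quotient.equiv (I.restrictScalars K) (Finsupp.supported K K B) e hmap) ≪≫ₗ
    (Submodule.quotientEquivOfIsCompl _ _ hcompl) ≪≫ₗ
    (Finsupp.supportedEquivFinsupp Bᶜ)
  -- Step 4 : counting
  have hbcompl : ∀ d : Fin 2 →₀ ℕ, d ∈ Bᶜ ↔ d 1 ≤ a ∧ d 0 + n * d 1 ≤ b := by
    intro d
    simp only [hB, Set.mem_compl_iff, Set.mem_setOf_eq, not_or, not_lt]
  let eB : ↥(Bᶜ) ≃ (Σ m : Fin (a + 1), Fin (b + 1 - n * (m : ℕ))) :=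
    { toFun := fun d =>
        ⟨⟨d.1 1, by have := (hbcompl d.1).1 d.2; omega⟩,
         ⟨d.1 0, by
            have h := (hbcompl d.1).1 d.2
            show d.1 0 < b + 1 - n * (d.1 1)
            omega⟩⟩
      invFun := fun x =>
        ⟨Finsupp.single 0 (x.2 : ℕ) + Finsupp.single 1 (x.1 : ℕ), by
          rw [hbcompl, single_apply0, single_apply1]
          have h1 := x.1.2
          have h2 := x.2.2
          constructor
          · omega
          · omega⟩
      left_inv := by
        rintro ⟨d, hd⟩
        apply Subtype.ext
        exact fin2_split d
      right_inv := by
        rintro ⟨⟨m, hm⟩, ⟨k, hk⟩⟩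
        dsimp only
        apply Sigma.ext
        · apply Fin.ext
          exact single_apply1 k m
        · refine (Fin.heq_ext_iff ?_).mpr (single_apply0 k m)
          show b + 1 - n * ((Finsupp.single (0 : Fin 2) k + Finsupp.single (1 : Fin 2) m : Fin 2 →₀ ℕ) 1)
              = b + 1 - n * m
          rw [single_apply1] }
  have : Fintype ↥(Bᶜ) := Fintype.ofEquiv _ eB.symm
  have hcard : Fintype.card ↥(Bᶜ) = (a + 1) * (b + 1) - n * a * (a + 1) / 2 := by
    rw [Fintype.card_congr eB, Fintype.card_sigma]
    simp only [Fintype.card_fin]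
    rw [Fin.sum_univ_eq_sum_range (fun m => b + 1 - n * m) (a + 1)]
    exact count_sum n a b (le_of_lt hb)
  have hfin : Module.Finite K (MvPolynomial (Fin 2) K ⧸ I) := Module.Finite.equiv E.symm
  have hrank : Module.finrank K (MvPolynomial (Fin 2) K ⧸ I) = (a + 1) * (b + 1) - n * a * (a + 1) / 2 := by
    rw [E.finrank_eq, Module.finrank_finsupp_self, hcard]
  refine ⟨hfin, hrank, ?_⟩
  -- Step 5 : local ring structure
  set J : Ideal (MvPolynomial (Fin 2) K ⧸ I) :=
    Ideal.span {Ideal.Quotient.mk I (X 0), Ideal.Quotient.mk I (X 1)} with hJ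
  have hker0 : ∀ p ∈ I, (aeval (0 : Fin 2 → K)).toRingHom p = 0 := by
    intro p hp
    rw [hI] at hp
    have hle : Ideal.span {p : MvPolynomial (Fin 2) K | ∃ k m : ℕ, (a < m ∨ b < k + n * m) ∧
        p = X 0 ^ k * X 1 ^ m} ≤ RingHom.ker (aeval (0 : Fin 2 → K)).toRingHom := by
      rw [Ideal.span_le]
      rintro q ⟨k, m, hkm, rfl⟩
      rw [SetLike.mem_coe, RingHom.mem_ker]
      simp only [AlgHom.toRingHom_eq_coe, RingHom.coe_coe, map_mul, map_pow, aeval_X,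
        Pi.zero_apply]
      rcases hkm with h | h
      · rw [zero_pow (by omega : m ≠ 0), mul_zero]
      · by_cases hm : m = 0
        · subst hm
          rw [mul_zero] at h
          rw [zero_pow (by omega : k ≠ 0), zero_mul]
        · rw [zero_pow hm, mul_zero]
    exact hle hp
  let ψ : (MvPolynomial (Fin 2) K ⧸ I) →+* K := Ideal.Quotient.lift I (aeval (0 : Fin 2 → K)).toRingHom hker0
  have hψmk : ∀ p : MvPolynomial (Fin 2) K, ψ (Ideal.Quotient.mk I p) = aeval (0 : Fin 2 → K) p := fun p =>
    Ideal.Quotient.lift_mk I _ _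
  have hψsurj : Function.Surjective ψ := by
    intro c
    exact ⟨Ideal.Quotient.mk I (C c), by rw [hψmk, aeval_C, Algebra.algebraMap_self_apply]⟩
  have hXpair : ({X 0, X 1} : Set (MvPolynomial (Fin 2) K)) = X '' Set.univ := by
    ext q
    constructor
    · rintro (rfl | rfl)
      · exact ⟨0, trivial, rfl⟩
      · exact ⟨1, trivial, rfl⟩
    · rintro ⟨i, -, rfl⟩
      fin_cases i
      · exact Or.inl rfl
      · exact Or.inr rfl
  have hkerψ : RingHom.ker ψ = J := by
    apply le_antisymm
    · intro q hq
      obtain ⟨p, rfl⟩ := Ideal.Quotient.mk_surjective q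
      rw [RingHom.mem_ker, hψmk, aeval_zero] at hq
      have hc : constantCoeff p = 0 := by
        simpa using hq
      have hpmem : p ∈ Ideal.span ({X 0, X 1} : Set (MvPolynomial (Fin 2) K)) := by
        rw [hXpair, mem_ideal_span_X_image]
        intro d hd
        have hd0 : d ≠ 0 := by
          rintro rfl
          rw [mem_support_iff] at hd
          exact hd hc
        by_contra hcon
        push_neg at hcon
        apply hd0
        ext i
        exact hcon i trivial
      have := Ideal.mem_map_of_mem (Ideal.Quotient.mk I) hpmem
      rwa [Ideal.map_span, Set.image_insert_eq, Set.image_singleton] at this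
    · rw [hJ, Ideal.span_le]
      rintro q (rfl | rfl) <;>
        · rw [SetLike.mem_coe, RingHom.mem_ker, hψmk]
          simp
  have hJmax : J.IsMaximal := hkerψ ▸ RingHom.ker_isMaximal_of_surjective ψ hψsurj
  -- nilpotency of the generators
  have hx : (Ideal.Quotient.mk I (X 0 : MvPolynomial (Fin 2) K)) ^ (b + 1) = 0 := by
    rw [← map_pow, Ideal.Quotient.eq_zero_iff_mem, hI]
    apply Ideal.subset_span
    exact ⟨b + 1, 0, Or.inr (by simp), by simp⟩
  have hy : (Ideal.Quotient.mk I (X 1 : MvPolynomial (Fin 2) K)) ^ (a + 1) = 0 := by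
    rw [← map_pow, Ideal.Quotient.eq_zero_iff_mem, hI]
    apply Ideal.subset_span
    exact ⟨0, a + 1, Or.inl (by omega), by simp⟩
  have hJle : ∀ M : Ideal (MvPolynomial (Fin 2) K ⧸ I), M.IsMaximal → J ≤ M := by
    intro M hM
    rw [hJ, Ideal.span_le]
    have hprime : M.IsPrime := hM.isPrime
    rintro q (rfl | rfl)
    · exact nilradical_le_prime M (mem_nilradical.2 ⟨b + 1, hx⟩)
    · exact nilradical_le_prime M (mem_nilradical.2 ⟨a + 1, hy⟩)
  have huniq : ∃! M : Ideal (MvPolynomial (Fin 2) K ⧸ I), M.IsMaximal :=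
    ⟨J, hJmax, fun M hM => (hJmax.eq_of_le hM.ne_top (hJle M hM)).symm⟩
  have hloc : IsLocalRing (MvPolynomial (Fin 2) K ⧸ I) := IsLocalRing.of_unique_max_ideal huniq
  exact ⟨hloc, (IsLocalRing.eq_maximalIdeal hJmax).symm⟩
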